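/- Let M₁ and M₂ be real 2×2 Hurwitz matrices whose (2,2) entries (bottom-right entries) are strictly positive, and let c > 0. For r > 0 let G(r) be the real 4×4 block matrix [[M₁, −c·r·E], [−c·r·E, M₂]], where E is the 2×2 matrix with 1 in the top-left entry and zeros elsewhere. Then there exists r₀ > 0 such that for all r ≥ r₀, det(G(r)) < 0, and consequently G(r) has a real eigenvalue λ > 0; in particular G(r) is not Hurwitz. -/

import Mathlib

/-- A real square matrix is Hurwitz if every complex eigenvalue has strictly
negative real part. -/
def Matrix.IsHurwitz {n : Type*} [Fintype n] [DecidableEq n]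
    (M : Matrix n n ℝ) : Prop :=
  ∀ μ ∈ spectrum ℂ (M.map Complex.ofReal), μ.re < 0

open Polynomial in
lemma my_charpoly_eval {n : Type*} [Fintype n] [DecidableEq n] {R : Type*} [CommRing R]
    (M : Matrix n n R) (μ : R) :
    M.charpoly.eval μ = (Matrix.scalar n μ - M).det := by
  rw [Matrix.charpoly, _root_.eval_det, Matrix.matPolyEquiv_charmatrix]
  simp

lemma my_mem_spectrum {n : Type*} [Fintype n] [DecidableEq n] {R : Type*} [Field R]
    (M : Matrix n n R) (μ : R) (h : (Matrix.scalar n μ - M).det = 0) :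
    μ ∈ spectrum R M := by
  rw [spectrum.mem_iff]
  intro hu
  rw [Matrix.isUnit_iff_isUnit_det] at hu
  rw [show (algebraMap R (Matrix n n R)) μ = Matrix.scalar n μ from rfl] at hu
  rw [h] at hu
  exact hu.ne_zero rfl

lemma my_det4 (a b d e p q s t k : ℝ) :
    (!![a, b, -k, 0; d, e, 0, 0; -k, 0, p, q; 0, 0, s, t]).det
      = (a * e - b * d) * (p * t - q * s) - k ^ 2 * (e * t) := by
  simp [Matrix.det_succ_row_zero, Fin.sum_univ_succ, Fin.succAbove]
  ring

theorem coupled_hurwitz_blocks_unstable (M₁ M₂ : Matrix (Fin 2) (Fin 2) ℝ)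
    (hM₁ : M₁.IsHurwitz) (hM₂ : M₂.IsHurwitz)
    (h₁ : 0 < M₁ 1 1) (h₂ : 0 < M₂ 1 1) (c : ℝ) (hc : 0 < c)
    (E : Matrix (Fin 2) (Fin 2) ℝ) (hE : E = !![1, 0; 0, 0])
    (G : ℝ → Matrix (Fin 2 ⊕ Fin 2) (Fin 2 ⊕ Fin 2) ℝ)
    (hG : ∀ r, G r = Matrix.fromBlocks M₁ (-(c * r) • E) (-(c * r) • E) M₂) :
    ∃ r₀ > (0 : ℝ), ∀ r ≥ r₀,
      (G r).det < 0 ∧ (∃ lam : ℝ, 0 < lam ∧ lam ∈ spectrum ℝ (G r)) ∧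
        ¬ (G r).IsHurwitz := by
  -- determinant formula
  have hdet : ∀ r, (G r).det =
      M₁.det * M₂.det - (c * r) ^ 2 * (M₁ 1 1 * M₂ 1 1) := by
    intro r
    rw [← Matrix.det_submatrix_equiv_self finSumFinEquiv.symm (G r)]
    have hsub : (G r).submatrix finSumFinEquiv.symm finSumFinEquiv.symm =
        !![M₁ 0 0, M₁ 0 1, -(c*r), 0;
           M₁ 1 0, M₁ 1 1, 0, 0;
           -(c*r), 0, M₂ 0 0, M₂ 0 1;
           0, 0, M₂ 1 0, M₂ 1 1] := by
      ext i j
      rw [hG r, hE]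
      fin_cases i <;> fin_cases j <;>
        simp [Matrix.submatrix_apply, Matrix.fromBlocks] <;> rfl
    rw [hsub, my_det4, Matrix.det_fin_two M₁, Matrix.det_fin_two M₂]
  set A : ℝ := c ^ 2 * (M₁ 1 1 * M₂ 1 1) with hA
  have hApos : 0 < A := by positivity
  set D : ℝ := M₁.det * M₂.det with hD
  refine ⟨max 1 ((|D| + 1) / A), lt_of_lt_of_le one_pos (le_max_left _ _), ?_⟩
  intro r hr
  have hr1 : (1 : ℝ) ≤ r := le_trans (le_max_left _ _) hr
  have hr2 : (|D| + 1) / A ≤ r := le_trans (le_max_right _ _) hr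
  have hrpos : 0 < r := lt_of_lt_of_le one_pos hr1
  have hAr : |D| + 1 ≤ A * r := by
    rw [div_le_iff₀ hApos] at hr2; linarith
  have hAr2 : A * r ≤ A * r ^ 2 := by
    have hrr : r ≤ r ^ 2 := by nlinarith
    exact mul_le_mul_of_nonneg_left hrr hApos.le
  have hdetneg : (G r).det < 0 := by
    rw [hdet r]
    have h5 : (c * r) ^ 2 * (M₁ 1 1 * M₂ 1 1) = A * r ^ 2 := by rw [hA]; ring
    rw [h5]
    have hD1 : D ≤ |D| := le_abs_self D
    linarith
  refine ⟨hdetneg, ?_⟩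
  -- find positive real eigenvalue via IVT on the characteristic polynomial
  set p : Polynomial ℝ := (G r).charpoly with hp
  have hmonic : p.Monic := (G r).charpoly_monic
  have hdeg : p.natDegree = 4 := by
    rw [hp, (G r).charpoly_natDegree_eq_dim]
    simp
  have hp0 : p.eval 0 < 0 := by
    have h6 := my_charpoly_eval (G r) 0
    have h7 : Matrix.scalar (Fin 2 ⊕ Fin 2) (0 : ℝ) - G r = -(G r) := by simp
    rw [hp, h6, h7, Matrix.det_neg,
      show Fintype.card (Fin 2 ⊕ Fin 2) = 4 by simp,
      show ((-1:ℝ))^(4:ℕ) = 1 by norm_num, one_mul]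
    exact hdetneg
  obtain ⟨x, hx1, hx0⟩ : ∃ x : ℝ, 1 ≤ p.eval x ∧ 0 ≤ x := by
    have hdeg' : (0 : WithBot ℕ) < p.degree := by
      rw [Polynomial.degree_eq_natDegree hmonic.ne_zero, hdeg]
      norm_num
    have htop : Filter.Tendsto (fun x => p.eval x) Filter.atTop Filter.atTop := by
      apply Polynomial.tendsto_atTop_of_leadingCoeff_nonneg p hdeg'
      rw [hmonic.leadingCoeff]; norm_num
    exact ((htop.eventually_ge_atTop 1).and (Filter.eventually_ge_atTop (0:ℝ))).exists
  have hx : 0 < p.eval x := lt_of_lt_of_le one_pos hx1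
  have hcont : ContinuousOn (fun t => p.eval t) (Set.Icc 0 x) :=
    p.continuous.continuousOn
  obtain ⟨lam, hlam_mem, hlam_eval⟩ :=
    intermediate_value_Icc hx0 hcont (show (0:ℝ) ∈ Set.Icc (p.eval 0) (p.eval x) from
      ⟨le_of_lt hp0, le_of_lt hx⟩)
  have hlam0 : p.eval lam = 0 := hlam_eval
  have hlam_pos : 0 < lam := by
    rcases lt_or_eq_of_le hlam_mem.1 with h | h
    · exact h
    · exfalso; rw [← h] at hlam0; linarith
  have hlam_det : (Matrix.scalar (Fin 2 ⊕ Fin 2) lam - G r).det = 0 := by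
    rw [← my_charpoly_eval]; exact hlam0
  have hlam_spec : lam ∈ spectrum ℝ (G r) := my_mem_spectrum _ _ hlam_det
  refine ⟨⟨lam, hlam_pos, hlam_spec⟩, ?_⟩
  -- not Hurwitz: lam is a complex eigenvalue with positive real part
  intro hH
  have hmem : (lam : ℂ) ∈ spectrum ℂ ((G r).map Complex.ofReal) := by
    apply my_mem_spectrum
    have hmap : (Matrix.scalar (Fin 2 ⊕ Fin 2) (lam : ℂ) - (G r).map Complex.ofReal)
        = (Matrix.scalar (Fin 2 ⊕ Fin 2) lam - G r).map Complex.ofReal := by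
      ext i j
      by_cases h : i = j <;>
        simp [Matrix.scalar, Matrix.map_apply, Matrix.diagonal, h, Matrix.sub_apply]
    rw [hmap,
      show (Matrix.scalar (Fin 2 ⊕ Fin 2) lam - G r).map Complex.ofReal
        = Complex.ofRealHom.mapMatrix (Matrix.scalar (Fin 2 ⊕ Fin 2) lam - G r) from rfl,
      ← RingHom.map_det Complex.ofRealHom, hlam_det]
    simp
  have := hH (lam : ℂ) hmem
  simp at this
  linarith
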